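/- For each degree d ≥ 0, the u^d-coefficients of the power series α_{k,(1,1)}(u) and (for each fixed t ≥ 2) α_{k,(1,t)}(u) are eventually constant as k → ∞, and the limit power series are α₁(u) = −(q²−1)(1−q³u³)·u·(1−q⁴u³)⁻¹ and, for each t ≥ 2, α_t(u) = (−(q−1)q^{2t−1}uᵗ + (q−1)q^{2t+1}u^{t+3})·(1−q⁴u³)⁻¹, where the inverses are taken in ℚ[[u]]. -/

import Mathlib

open PowerSeries Finset

set_option maxHeartbeats 1000000

/-- helper: coefficient comparison via a multiplied identity. -/
lemma key_helper (d : ℕ) (N D M E W P : PowerSeries ℚ)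
    (hD : constantCoeff D ≠ 0) (hE : constantCoeff E ≠ 0)
    (hW : constantCoeff W ≠ 0)
    (hP : (N * E - M * D) * W = P) (hdvd : (X : PowerSeries ℚ) ^ (d + 1) ∣ P) :
    PowerSeries.coeff d (N * D⁻¹) = PowerSeries.coeff d (M * E⁻¹) := by
  have e1 : W * W⁻¹ = 1 := PowerSeries.mul_inv_cancel W hW
  have e2 : D * D⁻¹ = 1 := PowerSeries.mul_inv_cancel D hD
  have e3 : E * E⁻¹ = 1 := PowerSeries.mul_inv_cancel E hE
  have h1 : N * D⁻¹ - M * E⁻¹ = P * (W⁻¹ * (D⁻¹ * E⁻¹)) := by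
    linear_combination (W⁻¹ * D⁻¹ * E⁻¹) * hP - N * D⁻¹ * e3 + M * E⁻¹ * e2 -
      ((N * E - M * D) * (D⁻¹ * E⁻¹)) * e1
  have h2 : (X : PowerSeries ℚ) ^ (d + 1) ∣ N * D⁻¹ - M * E⁻¹ := by
    rw [h1]; exact Dvd.dvd.mul_right hdvd _
  have := (PowerSeries.X_pow_dvd_iff.mp h2) d (Nat.lt_succ_self d)
  rw [map_sub] at this
  linarith

lemma sumS (q : ℚ) (k : ℕ) :
    (∑ i ∈ Icc 1 k, C ((q - 1) * q ^ (3 * i)) * X ^ (3 * i)) *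
        (C (q ^ 3) * X ^ 3 - 1) =
      C (q - 1) * ((C (q ^ 3) * X ^ 3) ^ (k + 1) - C (q ^ 3) * X ^ 3) := by
  set w : PowerSeries ℚ := C (q ^ 3) * X ^ 3 with hw
  have h1 : ∀ i : ℕ, C ((q - 1) * q ^ (3 * i)) * X ^ (3 * i) = C (q - 1) * w ^ i := by
    intro i
    rw [hw, mul_pow, ← map_pow, ← pow_mul, ← pow_mul, map_mul, map_pow]
    ring
  rw [Finset.sum_congr rfl fun i _ => h1 i, ← Finset.mul_sum]
  have h2 : ∑ i ∈ Icc 1 k, w ^ i = w * ∑ i ∈ range k, w ^ i := by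
    rw [← Finset.Ico_add_one_right_eq_Icc, Finset.sum_Ico_eq_sum_range]
    rw [Finset.mul_sum]
    refine Finset.sum_congr rfl fun i _ => ?_
    rw [pow_add, pow_one]
  rw [h2, mul_assoc, mul_assoc, geom_sum_mul]
  ring

lemma hcq (q : ℚ) : C (q ^ 4) * (X : PowerSeries ℚ) ^ 3 =
    C (q ^ 3) * X ^ 3 + C (q - 1) * (C (q ^ 3) * X ^ 3) := by
  have h : (q : ℚ) ^ 4 = q ^ 3 + (q - 1) * q ^ 3 := by ring
  rw [h, map_add, add_mul, map_mul]
  ring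

lemma hDk (q : ℚ) (k : ℕ) :
    (1 - ∑ i ∈ Icc 1 k, C ((q - 1) * q ^ (3 * i)) * X ^ (3 * i)) *
        (1 - C (q ^ 3) * X ^ 3) =
      (1 - C (q ^ 4) * X ^ 3) + C (q - 1) * (C (q ^ 3) * X ^ 3) ^ (k + 1) := by
  linear_combination sumS q k + hcq q

lemma hD0 (q : ℚ) (k : ℕ) :
    constantCoeff (1 - ∑ i ∈ Icc 1 k, C ((q - 1) * q ^ (3 * i)) * X ^ (3 * i)) ≠ 0 := by
  rw [map_sub, map_one, map_sum]
  have h : ∀ i ∈ Icc 1 k,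
      constantCoeff (C ((q - 1) * q ^ (3 * i)) * X ^ (3 * i)) = 0 := by
    intro i hi
    have h1 : 1 ≤ i := (Finset.mem_Icc.mp hi).1
    rw [map_mul, map_pow, constantCoeff_X, zero_pow (by omega), mul_zero]
  rw [Finset.sum_eq_zero h, sub_zero]
  norm_num

lemma sumT (q : ℚ) (t k : ℕ) (ht : 2 ≤ t) :
    (∑ i ∈ Icc t k, C ((q - 1) ^ 2 * q ^ (3 * i - t + 1)) * X ^ (3 * i - 2 * t + 3)) *
        (C (q ^ 3) * X ^ 3 - 1) =
      C ((q - 1) ^ 2 * q ^ (2 * t + 1)) * X ^ (t + 3) *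
        ((C (q ^ 3)) ^ (k + 1 - t) * X ^ (3 * (k + 1 - t)) - 1) := by
  set w : PowerSeries ℚ := C (q ^ 3) * X ^ 3 with hw
  have h1 : ∀ i ∈ Icc t k, C ((q - 1) ^ 2 * q ^ (3 * i - t + 1)) * X ^ (3 * i - 2 * t + 3) =
      C ((q - 1) ^ 2 * q ^ (2 * t + 1)) * X ^ (t + 3) * w ^ (i - t) := by
    intro i hi
    have hti : t ≤ i := (Finset.mem_Icc.mp hi).1
    have e1 : 3 * i - t + 1 = (2 * t + 1) + 3 * (i - t) := by omega
    have e2 : 3 * i - 2 * t + 3 = (t + 3) + 3 * (i - t) := by omega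
    have e3 : (q - 1) ^ 2 * q ^ (2 * t + 1 + 3 * (i - t)) =
        ((q - 1) ^ 2 * q ^ (2 * t + 1)) * (q ^ 3) ^ (i - t) := by
      rw [pow_add, pow_mul]; ring
    rw [e1, e2, e3, map_mul, map_pow, hw, mul_pow, ← pow_mul, pow_add]
    ring
  rw [Finset.sum_congr rfl h1]
  have h2 : ∑ i ∈ Icc t k, C ((q - 1) ^ 2 * q ^ (2 * t + 1)) * X ^ (t + 3) * w ^ (i - t) =
      C ((q - 1) ^ 2 * q ^ (2 * t + 1)) * X ^ (t + 3) *
        ∑ j ∈ range (k + 1 - t), w ^ j := by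
    rw [Finset.mul_sum, ← Finset.Ico_add_one_right_eq_Icc, Finset.sum_Ico_eq_sum_range]
    refine Finset.sum_congr rfl fun j _ => ?_
    rw [show t + j - t = j from by omega]
  rw [h2, mul_assoc, geom_sum_mul, hw, mul_pow, ← pow_mul]

/-- `α_{k,(1,1)}(u) = −(q²−1)u · (1 − Σ_{i=1}^{k}(q−1)q^{3i}u^{3i})⁻¹ ∈ ℚ[[u]]`. -/
noncomputable def alphaK11 (q k : ℕ) : PowerSeries ℚ :=
  -(C ((q : ℚ) ^ 2 - 1)) * X *
    (1 - ∑ i ∈ Finset.Icc 1 k, C (((q : ℚ) - 1) * (q : ℚ) ^ (3 * i)) * X ^ (3 * i))⁻¹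

/-- `α_{k,(1,t)}(u) = (−(q−1)q^{2t−1}uᵗ − Σ_{i=t}^{k}(q−1)²q^{3i−t+1}u^{3i−2t+3})
  · (1 − Σ_{i=1}^{k}(q−1)q^{3i}u^{3i})⁻¹ ∈ ℚ[[u]]` (for `2 ≤ t ≤ k`). -/
noncomputable def alphaK1t (q k t : ℕ) : PowerSeries ℚ :=
  (-(C (((q : ℚ) - 1) * (q : ℚ) ^ (2 * t - 1))) * X ^ t -
      ∑ i ∈ Finset.Icc t k,
        C (((q : ℚ) - 1) ^ 2 * (q : ℚ) ^ (3 * i - t + 1)) * X ^ (3 * i - 2 * t + 3)) *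
    (1 - ∑ i ∈ Finset.Icc 1 k, C (((q : ℚ) - 1) * (q : ℚ) ^ (3 * i)) * X ^ (3 * i))⁻¹

/-- The `u^d`-coefficients of `α_{k,(1,1)}(u)` and `α_{k,(1,t)}(u)` are eventually constant
as `k → ∞`, with limits `α₁(u) = −(q²−1)(1−q³u³)·u·(1−q⁴u³)⁻¹` and, for `t ≥ 2`,
`α_t(u) = (−(q−1)q^{2t−1}uᵗ + (q−1)q^{2t+1}u^{t+3})·(1−q⁴u³)⁻¹`. -/
theorem alphaK_tendsto (q : ℕ) (hq : 2 ≤ q) :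
    (∀ d : ℕ, ∃ K : ℕ, ∀ k : ℕ, K ≤ k → 1 ≤ k →
      PowerSeries.coeff d (alphaK11 q k) =
        PowerSeries.coeff d
          (-(C ((q : ℚ) ^ 2 - 1)) * (1 - C ((q : ℚ) ^ 3) * X ^ 3) * X *
            (1 - C ((q : ℚ) ^ 4) * X ^ 3)⁻¹)) ∧
    (∀ t : ℕ, 2 ≤ t → ∀ d : ℕ, ∃ K : ℕ, ∀ k : ℕ, K ≤ k → t ≤ k →
      PowerSeries.coeff d (alphaK1t q k t) =
        PowerSeries.coeff d
          ((-(C (((q : ℚ) - 1) * (q : ℚ) ^ (2 * t - 1))) * X ^ t +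
              C (((q : ℚ) - 1) * (q : ℚ) ^ (2 * t + 1)) * X ^ (t + 3)) *
            (1 - C ((q : ℚ) ^ 4) * X ^ 3)⁻¹)) := by
  constructor
  · -- case (1,1)
    intro d
    refine ⟨d, fun k hk _ => ?_⟩
    rw [alphaK11]
    apply key_helper d _ _ _ _ (1 - C ((q:ℚ) ^ 3) * X ^ 3)
      (C ((q:ℚ) ^ 2 - 1) * X * (1 - C ((q:ℚ) ^ 3) * X ^ 3) *
        (C ((q:ℚ) - 1) * (C ((q:ℚ) ^ 3)) ^ (k + 1)) * X ^ (3 * (k + 1)))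
    · exact hD0 (q:ℚ) k
    · simp
    · simp
    · linear_combination (C ((q:ℚ) ^ 2 - 1) * X * (1 - C ((q:ℚ) ^ 3) * X ^ 3)) *
        hDk (q:ℚ) k
    · exact dvd_mul_of_dvd_right (pow_dvd_pow _ (by omega)) _
  · -- case (1,t)
    intro t ht d
    refine ⟨d, fun k hk htk => ?_⟩
    obtain ⟨j, rfl⟩ : ∃ j, t = j + 2 := ⟨t - 2, by omega⟩
    rw [alphaK1t]
    simp only [show 2 * (j + 2) - 1 = 2 * j + 3 from by omega,
      show 2 * (j + 2) + 1 = 2 * j + 5 from by omega]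
    have i1 : C (((q:ℚ) - 1) * (q:ℚ) ^ (2 * j + 3)) * C ((q:ℚ) ^ 3) =
        C (((q:ℚ) - 1) ^ 2 * (q:ℚ) ^ (2 * (j + 2) + 1)) +
          C (((q:ℚ) - 1) * (q:ℚ) ^ (2 * j + 5)) := by
      rw [← map_mul, ← map_add]; congr 1; ring
    have i2 : C (((q:ℚ) - 1) * (q:ℚ) ^ (2 * j + 3)) * C ((q:ℚ) - 1) =
        C (((q:ℚ) - 1) ^ 2 * (q:ℚ) ^ (2 * j + 3)) := by
      rw [← map_mul]; congr 1; ring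
    have i3 : C (((q:ℚ) - 1) * (q:ℚ) ^ (2 * j + 5)) * C ((q:ℚ) - 1) =
        C (((q:ℚ) - 1) ^ 2 * (q:ℚ) ^ (2 * (j + 2) + 1)) := by
      rw [← map_mul]; congr 1; ring
    apply key_helper d _ _ _ _ (1 - C ((q:ℚ) ^ 3) * X ^ 3)
      (C (((q:ℚ) - 1) ^ 2 * (q:ℚ) ^ (2 * (j + 2) + 1)) *
          C ((q:ℚ) ^ 3) ^ (k + 1 - (j + 2)) *
          X ^ ((j + 2 + 3) + 3 * (k + 1 - (j + 2))) * (1 - C ((q:ℚ) ^ 4) * X ^ 3)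
        + C (((q:ℚ) - 1) ^ 2 * (q:ℚ) ^ (2 * j + 3)) * C ((q:ℚ) ^ 3) ^ (k + 1) *
          X ^ ((j + 2) + 3 * (k + 1))
        - C (((q:ℚ) - 1) ^ 2 * (q:ℚ) ^ (2 * (j + 2) + 1)) * C ((q:ℚ) ^ 3) ^ (k + 1) *
          X ^ ((j + 2 + 3) + 3 * (k + 1)))
    · exact hD0 (q:ℚ) k
    · simp
    · simp
    · linear_combination (1 - C ((q:ℚ) ^ 4) * X ^ 3) * sumT (q:ℚ) (j + 2) k (by omega) +
        (C (((q:ℚ) - 1) * (q:ℚ) ^ (2 * j + 3)) * X ^ (j + 2) -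
          C (((q:ℚ) - 1) * (q:ℚ) ^ (2 * j + 5)) * X ^ (j + 2 + 3)) * hDk (q:ℚ) k +
        (X ^ (j + 2) * X ^ 3 * (1 - C ((q:ℚ) ^ 4) * X ^ 3)) * i1 +
        (X ^ (j + 2) * (C ((q:ℚ) ^ 3) * X ^ 3) ^ (k + 1)) * i2 -
        (X ^ (j + 2 + 3) * (C ((q:ℚ) ^ 3) * X ^ 3) ^ (k + 1)) * i3
    · refine dvd_sub (dvd_add ?_ ?_) ?_
      · exact dvd_mul_of_dvd_left ((pow_dvd_pow (X : PowerSeries ℚ)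
          (by omega)).mul_left _) _
      · exact (pow_dvd_pow (X : PowerSeries ℚ) (by omega)).mul_left _
      · exact (pow_dvd_pow (X : PowerSeries ℚ) (by omega)).mul_left _
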